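/- The Load Balancing Algorithm, which processes items in order of non-increasing cost and assigns each item to an agent currently holding a bundle of minimum cost, outputs a PROPX allocation: for every agent i and every item e in the final bundle X_i, c(X_i − e) ≤ c(M)/n. -/

import Mathlib

open Finset

/-- The Load Balancing Algorithm outputs a PROPX allocation for identical agents.
The run of the algorithm is described by the assignment `a : Fin m → Fin n`
(item `e` goes to agent `a e`): items have nonnegative costs sorted in
non-increasing order, and when item `j` is allocated, its receiver `a j` is an
agent whose current bundle (items `e < j` already assigned to her) has minimum
cost. Conclusion: for every agent `i` and every item `e ∈ X_i`,
`c(X_i - e) ≤ c(M)/n`. -/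
theorem loadBalancing_PROPX (n m : ℕ) (hn : 0 < n) (c : Fin m → ℝ)
    (hc0 : ∀ e, 0 ≤ c e)
    (hsort : ∀ j k : Fin m, j ≤ k → c k ≤ c j)
    (a : Fin m → Fin n)
    (halg : ∀ (j : Fin m) (i : Fin n),
      ∑ e ∈ Finset.univ.filter (fun e => e < j ∧ a e = a j), c e ≤
        ∑ e ∈ Finset.univ.filter (fun e => e < j ∧ a e = i), c e) :
    ∀ (i : Fin n) (e : Fin m), a e = i →
      ∑ e' ∈ Finset.univ.filter (fun e' => a e' = i ∧ e' ≠ e), c e' ≤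
        (∑ e', c e') / n := by
  intro i e hae
  set S : Finset (Fin m) := Finset.univ.filter (fun e' => a e' = i) with hS
  have heS : e ∈ S := by simp [hS, hae]
  have hne : S.Nonempty := ⟨e, heS⟩
  set j := S.max' hne with hj
  have hjS : j ∈ S := S.max'_mem hne
  have haj : a j = i := by simpa [hS] using hjS
  have hej : e ≤ j := S.le_max' e heS
  have hcje : c j ≤ c e := hsort e j hej
  have hfe : Finset.univ.filter (fun e' => a e' = i ∧ e' ≠ e)
      = S.erase e := by
    rw [hS, ← Finset.filter_filter, Finset.filter_ne']
  have hfj : S.erase j = Finset.univ.filter (fun e' => e' < j ∧ a e' = i) := by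
    ext x
    simp only [Finset.mem_erase, hS, Finset.mem_filter, Finset.mem_univ,
      true_and]
    constructor
    · rintro ⟨hxj, hx⟩
      exact ⟨lt_of_le_of_ne (S.le_max' x (by simp [hS, hx])) hxj, hx⟩
    · rintro ⟨hxj, hx⟩
      exact ⟨ne_of_lt hxj, hx⟩
  have step1 : ∑ e' ∈ S.erase e, c e' ≤ ∑ e' ∈ S.erase j, c e' := by
    rw [Finset.sum_erase_eq_sub heS, Finset.sum_erase_eq_sub hjS]
    linarith
  -- n copies of the bundle at time j is at most the total
  set T : ℝ := ∑ e' ∈ Finset.univ.filter (fun e' => e' < j ∧ a e' = i), c e'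
    with hT
  have hTk : ∀ k : Fin n,
      T ≤ ∑ e' ∈ Finset.univ.filter (fun e' => e' < j ∧ a e' = k), c e' := by
    intro k
    have := halg j k
    rwa [haj] at this
  have hsum : ∑ k : Fin n,
      (∑ e' ∈ Finset.univ.filter (fun e' => e' < j ∧ a e' = k), c e')
      = ∑ e' ∈ Finset.univ.filter (fun e' => e' < j), c e' := by
    rw [← Finset.sum_fiberwise (Finset.univ.filter (fun e' => e' < j))
      (fun e' => a e') c]
    apply Finset.sum_congr rfl
    intro k _
    apply Finset.sum_congr _ (fun _ _ => rfl)
    rw [Finset.filter_filter]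
  have hnT : (n : ℝ) * T ≤ ∑ e', c e' := by
    calc (n : ℝ) * T = ∑ _k : Fin n, T := by
          simp [Finset.sum_const, mul_comm]
      _ ≤ ∑ k : Fin n,
          (∑ e' ∈ Finset.univ.filter (fun e' => e' < j ∧ a e' = k), c e') :=
          Finset.sum_le_sum (fun k _ => hTk k)
      _ = ∑ e' ∈ Finset.univ.filter (fun e' => e' < j), c e' := hsum
      _ ≤ ∑ e', c e' := Finset.sum_le_sum_of_subset_of_nonneg
          (Finset.filter_subset _ _) (fun x _ _ => hc0 x)
  have hnpos : (0 : ℝ) < n := by exact_mod_cast hn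
  rw [hfe]
  calc ∑ e' ∈ S.erase e, c e' ≤ ∑ e' ∈ S.erase j, c e' := step1
    _ = T := by rw [hfj]
    _ ≤ (∑ e', c e') / n := by
        rw [le_div_iff₀ hnpos]; linarith
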